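/- Let b > 0, k ≠ 1 real, and a real, and set c = 2ab/(1−k) (equivalently 2ab + (k−1)c = 0). Then f₀(r) = 1 solves r f'' + (−2b r² − (c/b) r + k − 1) f' + (2b·0·r − a + (1−k)c/(2b)) f = 0, and consequently u(r) = r^{(k−1)/2} exp(−(c/(2b)) r − (b/2) r²) solves −u'' + [(k−1)(k−3)/(4r²) + a/r + c r + b² r²] u = (bk − c²/(4b²)) u on (0,∞). -/

import Mathlib

theorem stmt_11 (b a k c : ℝ) (hb : 0 < b) (hk : k ≠ 1)
    (hc : c = 2 * a * b / (1 - k))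
    (f : ℝ → ℝ) (hf : f = fun _ : ℝ => (1 : ℝ))
    (u : ℝ → ℝ)
    (hu : u = fun r : ℝ =>
      r ^ ((k - 1) / 2) * Real.exp (-(c / (2 * b)) * r - (b / 2) * r ^ 2)) :
    (∀ r ∈ Set.Ioi (0 : ℝ),
        r * deriv (deriv f) r +
          (-2 * b * r ^ 2 - (c / b) * r + k - 1) * deriv f r +
          (2 * b * 0 * r - a + (1 - k) * c / (2 * b)) * f r = 0) ∧
    (∀ r ∈ Set.Ioi (0 : ℝ),
        -(deriv (deriv u) r) +
          ((k - 1) * (k - 3) / (4 * r ^ 2) + a / r + c * r + b ^ 2 * r ^ 2) * u r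
          = (b * k - c ^ 2 / (4 * b ^ 2)) * u r) := by
  have hk' : (1 : ℝ) - k ≠ 0 := sub_ne_zero.mpr (fun h => hk h.symm)
  have hbne : b ≠ 0 := ne_of_gt hb
  subst hc
  set c : ℝ := 2 * a * b / (1 - k) with hc
  constructor
  · intro r _
    subst hf
    have h1 : deriv (fun _ : ℝ => (1 : ℝ)) = fun _ : ℝ => (0 : ℝ) := by
      funext x; simp
    rw [h1]
    simp only [deriv_const']
    rw [hc]
    field_simp
    ring
  · intro r hr
    have hr0 : (0 : ℝ) < r := hr
    have hrne : r ≠ 0 := ne_of_gt hr0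
    set p : ℝ := (k - 1) / 2 with hp
    set q : ℝ → ℝ := fun x => -(c / (2 * b)) * x - (b / 2) * x ^ 2 with hq
    have hqd : ∀ x : ℝ, HasDerivAt q (-(c / (2 * b)) - b * x) x := by
      intro x
      have h1 : HasDerivAt (fun y : ℝ => -(c / (2 * b)) * y) (-(c / (2 * b))) x := by
        simpa using (hasDerivAt_id x).const_mul (-(c / (2 * b)))
      have h2 : HasDerivAt (fun y : ℝ => (b / 2) * y ^ 2) ((b / 2) * (2 * x)) x := by
        simpa using (hasDerivAt_pow 2 x).const_mul (b / 2)
      have := h1.sub h2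
      exact this.congr_deriv (by ring)
    set D : ℝ → ℝ := fun x => p / x + (-(c / (2 * b)) - b * x) with hD
    have hu1 : ∀ x ∈ Set.Ioi (0 : ℝ), HasDerivAt u (u x * D x) x := by
      intro x hx
      have hx0 : (0 : ℝ) < x := hx
      have hxne : x ≠ 0 := ne_of_gt hx0
      have h1 : HasDerivAt (fun y : ℝ => y ^ p) (p * x ^ (p - 1)) x :=
        Real.hasDerivAt_rpow_const (Or.inl hxne)
      have h2 : HasDerivAt (fun y : ℝ => Real.exp (q y))
          (Real.exp (q x) * (-(c / (2 * b)) - b * x)) x := by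
        simpa [mul_comm] using (hqd x).exp
      have h3 := h1.mul h2
      have hueq : u = fun y : ℝ => y ^ p * Real.exp (q y) := by
        rw [hu]
      rw [hueq]
      refine h3.congr_deriv ?_
      symm
      rw [Real.rpow_sub hx0, Real.rpow_one]
      show x ^ p * Real.exp (q x) * (p / x + (-(c / (2 * b)) - b * x)) = _
      field_simp
    have hderiv_u : Set.EqOn (deriv u) (fun x => u x * D x) (Set.Ioi 0) :=
      fun x hx => (hu1 x hx).deriv
    have hDd : HasDerivAt D (-(p / r ^ 2) - b) r := by
      have h1 : HasDerivAt (fun x : ℝ => p / x) (-(p / r ^ 2)) r := by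
        have := (hasDerivAt_inv hrne).const_mul p
        rw [show (fun x : ℝ => p / x) = fun x => p * x⁻¹ from funext fun x => div_eq_mul_inv p x]
        exact this.congr_deriv (by ring)
      have h2 : HasDerivAt (fun x : ℝ => -(c / (2 * b)) - b * x) (-b) r := by
        have := ((hasDerivAt_id r).const_mul b).const_sub (-(c / (2 * b)))
        simpa using this
      have := h1.add h2
      exact this.congr_deriv (by ring)
    have hdd : deriv (deriv u) r = u r * D r * D r + u r * (-(p / r ^ 2) - b) := by
      have heq : deriv u =ᶠ[nhds r] fun x => u x * D x :=
        Filter.eventuallyEq_of_mem (isOpen_Ioi.mem_nhds hr) hderiv_u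
      rw [heq.deriv_eq]
      exact (((hu1 r hr).mul hDd)).deriv
    rw [hdd]
    have hur : u r = r ^ p * Real.exp (q r) := by rw [hu]
    rw [hur, hD]
    have hE : Real.exp (q r) ≠ 0 := Real.exp_ne_zero _
    simp only [hp, hc]
    field_simp
    ring
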